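/- The set Per(g_{1,∞}) of periodic points of the NADS (Σ, g_{1,∞}) is dense in Σ: for every x ∈ Σ and every δ > 0 there exists a periodic point η of g_{1,∞} with d(x,η) < δ. -/

import Mathlib

/-- The symbolic space `Σ = {0,1}^ℕ`; here `x : BinSeq` is 0-indexed, so `x n`
represents the symbol `x_{n+1}` of the paper. -/
abbrev BinSeq : Type := ℕ → Bool

/-- The shift map `σ(x₁x₂x₃⋯) = x₂x₃⋯`. -/
def shift (x : BinSeq) : BinSeq := fun n => x (n + 1)

/-- The metric `d(x,y) = Σ_{n≥1} |x_n − y_n| / 2^n` on `Σ` (with our 0-indexing, symbol `n`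
contributes `1/2^{n+1}`). -/
noncomputable def dS (x y : BinSeq) : ℝ :=
  ∑' n : ℕ, (if x n = y n then (0 : ℝ) else 1) / 2 ^ (n + 1)

/-- `tm n` is the Thue–Morse symbol `ξ_{n+1}`: the parity of the number of ones in the
binary expansion of `n` (i.e. of `(n+1) − 1`); `true` encodes `1` and `false` encodes `0`. -/
def tm (n : ℕ) : Bool := (Nat.digits 2 n).sum % 2 == 1

/-- `g i` is the map `g_{i+1}` of the NADS: `σ` if `ξ_{i+1} = 0` and `σ²` if `ξ_{i+1} = 1`. -/
def g (i : ℕ) : BinSeq → BinSeq := if tm i then shift ∘ shift else shift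

/-- `gComp n = g_1^{(n)} = g_n ∘ g_{n-1} ∘ ⋯ ∘ g_1`. -/
def gComp : ℕ → BinSeq → BinSeq
  | 0 => id
  | n + 1 => g n ∘ gComp n

/-- A set `U ⊆ Σ` is open for the metric `d`. -/
def IsOpenS (U : Set BinSeq) : Prop :=
  ∀ x ∈ U, ∃ ε : ℝ, 0 < ε ∧ ∀ y : BinSeq, dS x y < ε → y ∈ U

/-- `x` is a periodic point of the NADS `g_{1,∞}`: there is `n ≥ 1` with
`g_1^{(nk)}(x) = x` for all `k ≥ 0`. -/
def IsGPeriodicPt (x : BinSeq) : Prop :=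
  ∃ n : ℕ, 1 ≤ n ∧ ∀ k : ℕ, gComp (n * k) x = x

/-- The orbit `orb(x, g_{1,∞}) = {g_1^{(n)}(x) : n ≥ 0}`. -/
def gOrbit (x : BinSeq) : Set BinSeq :=
  Set.range fun n : ℕ => gComp n x

/-! ### Auxiliary lemmas -/

/-- Total shift amount after `n` steps. -/
def cnt : ℕ → ℕ
  | 0 => 0
  | n + 1 => cnt n + (if tm n then 2 else 1)

lemma shift_iterate (j : ℕ) (x : BinSeq) (n : ℕ) : (shift^[j] x) n = x (n + j) := by
  induction j generalizing x n with
  | zero => rfl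
  | succ j ih =>
    rw [Function.iterate_succ_apply, ih, shift]
    ring_nf

lemma gComp_eq_iterate (n : ℕ) (x : BinSeq) : gComp n x = shift^[cnt n] x := by
  induction n with
  | zero => rfl
  | succ n ih =>
    show g n (gComp n x) = _
    rw [ih]
    cases htm : tm n with
    | true =>
      simp only [g, htm, if_true, cnt]
      rw [show cnt n + 2 = 2 + cnt n by ring, Function.iterate_add_apply]
      rfl
    | false =>
      simp only [g, htm, Bool.false_eq_true, if_false, cnt]
      rw [show cnt n + 1 = 1 + cnt n by ring, Function.iterate_add_apply]
      rfl

lemma tm_two_mul (m : ℕ) : tm (2 * m) = tm m := by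
  rcases Nat.eq_zero_or_pos m with rfl | hm
  · rfl
  · unfold tm
    rw [Nat.digits_def' (by norm_num : 1 < 2) (by omega), Nat.mul_mod_right,
      Nat.mul_div_cancel_left _ (by norm_num : 0 < 2)]
    simp

lemma tm_two_mul_add_one (m : ℕ) : tm (2 * m + 1) = !tm m := by
  unfold tm
  rw [Nat.digits_def' (by norm_num : 1 < 2) (by omega),
    show (2 * m + 1) % 2 = 1 by omega, show (2 * m + 1) / 2 = m by omega]
  simp only [List.sum_cons]
  rcases Nat.mod_two_eq_zero_or_one (Nat.digits 2 m).sum with h | h <;>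
    simp [Nat.add_mod, h]

lemma cnt_two_mul (M : ℕ) : cnt (2 * M) = 3 * M := by
  induction M with
  | zero => rfl
  | succ M ih =>
    have h1 : 2 * (M + 1) = (2 * M + 1) + 1 := by ring
    rw [h1, cnt, cnt, ih, tm_two_mul_add_one, tm_two_mul]
    cases tm M <;> simp <;> ring

lemma summable_aux (p : ℕ) (f : ℕ → ℝ) (hf0 : ∀ n, 0 ≤ f n)
    (hf : ∀ n, f n ≤ (1/2 : ℝ) ^ (n + p + 1)) : Summable f := by
  apply Summable.of_nonneg_of_le hf0 hf
  have : Summable fun n : ℕ => (1/2 : ℝ) ^ n :=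
    summable_geometric_of_lt_one (by norm_num) (by norm_num)
  exact (this.mul_right ((1/2 : ℝ) ^ (p + 1))).congr fun n => (pow_add _ n (p + 1)).symm

lemma dS_le_of_agree (x y : BinSeq) (p : ℕ) (h : ∀ n < p, x n = y n) :
    dS x y ≤ (1/2 : ℝ) ^ p := by
  set f : ℕ → ℝ := fun n => (if x n = y n then (0 : ℝ) else 1) / 2 ^ (n + 1) with hfdef
  have hf0 : ∀ n, 0 ≤ f n := by
    intro n; dsimp [f]; split <;> positivity
  have hfle : ∀ n, f n ≤ (1/2 : ℝ) ^ (n + 1) := by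
    intro n; dsimp [f]; split
    · rw [zero_div]; positivity
    · rw [div_pow, one_pow]
  have hsum : Summable f :=
    summable_aux 0 f hf0 (by intro n; simpa using hfle n)
  have hsplit := (Summable.sum_add_tsum_nat_add p hsum).symm
  have hfirst : ∑ i ∈ Finset.range p, f i = 0 := by
    apply Finset.sum_eq_zero
    intro i hi
    simp [f, h i (Finset.mem_range.mp hi)]
  have htail : ∑' n, f (n + p) ≤ (1/2 : ℝ) ^ p := by
    have h2 : ∀ n, f (n + p) ≤ (1/2 : ℝ) ^ (n + p + 1) := fun n => hfle (n + p)
    calc ∑' n, f (n + p) ≤ ∑' n : ℕ, (1/2 : ℝ) ^ (n + p + 1) := by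
          apply Summable.tsum_le_tsum h2 (summable_aux p _ (fun n => hf0 _) h2)
          apply summable_aux p _ (fun n => by positivity) (fun n => le_refl _)
      _ = (1/2 : ℝ) ^ p := by
          have : ∀ n : ℕ, (1/2 : ℝ) ^ (n + p + 1) = (1/2 : ℝ) ^ n * (1/2) ^ (p + 1) := by
            intro n; rw [← pow_add]; ring_nf
          rw [tsum_congr this, tsum_mul_right,
            tsum_geometric_of_lt_one (by norm_num) (by norm_num), pow_succ]
          ring
  show dS x y ≤ _
  rw [dS, hsplit, hfirst, zero_add]
  exact htail

/-- The set of periodic points of the NADS `(Σ, g_{1,∞})` is dense: every point of `Σ` is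
within `δ` of a periodic point, for every `δ > 0`. -/
theorem gPeriodicPts_dense :
    ∀ x : BinSeq, ∀ δ : ℝ, 0 < δ → ∃ η : BinSeq, IsGPeriodicPt η ∧ dS x η < δ := by
  intro x δ hδ
  -- choose m with (1/2)^m < δ
  obtain ⟨m, hm⟩ := exists_pow_lt_of_lt_one hδ (by norm_num : (1/2 : ℝ) < 1)
  set p : ℕ := 3 * 2 ^ m with hp
  have hpm : m ≤ p := by
    have : m ≤ 2 ^ m := Nat.lt_two_pow_self |>.le
    omega
  set η : BinSeq := fun n => x (n % p) with hη
  have hppos : 0 < p := by positivity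
  refine ⟨η, ⟨2 ^ (m + 1), Nat.one_le_two_pow, ?_⟩, ?_⟩
  · intro k
    have h1 : 2 ^ (m + 1) * k = 2 * (2 ^ m * k) := by ring
    rw [gComp_eq_iterate, h1, cnt_two_mul]
    funext n
    rw [shift_iterate]
    show x ((n + 3 * (2 ^ m * k)) % p) = x (n % p)
    congr 1
    rw [show 3 * (2 ^ m * k) = p * k by rw [hp]; ring, Nat.add_mul_mod_self_left]
  · have hagree : ∀ n < p, x n = η n := by
      intro n hn
      show x n = x (n % p)
      rw [Nat.mod_eq_of_lt hn]
    calc dS x η ≤ (1/2 : ℝ) ^ p := dS_le_of_agree x η p hagree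
      _ ≤ (1/2 : ℝ) ^ m := pow_le_pow_of_le_one (by norm_num) (by norm_num) hpm
      _ < δ := hm
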